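/- If G is a finite connected simple graph with n(G) ≥ 2 and x ∈ V(G), then (n(G) − 1)/ecc_G(x) ≤ v_x(G) ≤ n(G) − ecc_G(x). -/

import Mathlib

open SimpleGraph Finset Classical

variable {V : Type*}

/-- A walk `p` is a shortest path between its endpoints. -/
def SimpleGraph.IsShortestPath (G : SimpleGraph V) {x y : V} (p : G.Walk x y) : Prop :=
  p.IsPath ∧ p.length = G.dist x y

/-- `S` is an `x`-visibility set: `x ∉ S` and for every `y ∈ S` there is a shortest
`x,y`-path meeting `S` only in `y`. -/
def SimpleGraph.IsXVisSet (G : SimpleGraph V) (x : V) (S : Finset V) : Prop :=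
  x ∉ S ∧ ∀ y ∈ S, ∃ p : G.Walk x y, G.IsShortestPath p ∧
    ∀ z ∈ p.support, z ∈ S → z = y

/-- The `x`-visibility number `v_x(G)`: the maximum cardinality of an `x`-visibility set. -/
noncomputable def SimpleGraph.vx (G : SimpleGraph V) (x : V) : ℕ :=
  sSup {n | ∃ S : Finset V, G.IsXVisSet x S ∧ S.card = n}

/-- The vertex visibility number `vv(G)`: the maximum of `v_x(G)` over all vertices. -/
noncomputable def SimpleGraph.vv (G : SimpleGraph V) [Fintype V] : ℕ :=
  Finset.univ.sup fun x => G.vx x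

/-- The eccentricity of x: the maximum distance from x to any vertex. -/
noncomputable def SimpleGraph.ecc (G : SimpleGraph V) [Fintype V] (x : V) : ℕ :=
  Finset.univ.sup fun y => G.dist x y

section Helpers
variable {G : SimpleGraph V}

lemma dist_getVert_le (hconn : G.Connected) {x y : V} (p : G.Walk x y) :
    ∀ i : ℕ, G.dist x (p.getVert i) ≤ i := by
  induction p with
  | nil => intro i; rw [Walk.getVert_of_length_le _ (by simp)]; simp [SimpleGraph.dist_self]
  | cons h q ih =>
    intro i
    cases i with
    | zero => simp [Walk.getVert_zero, SimpleGraph.dist_self]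
    | succ n =>
      rw [Walk.getVert_cons_succ]
      calc G.dist _ _ ≤ G.dist _ _ + G.dist _ (q.getVert n) := hconn.dist_triangle
        _ ≤ 1 + n := by
            gcongr
            · exact (G.dist_le h.toWalk).trans (by simp)
            · exact ih n
        _ = n + 1 := by omega

lemma dist_getVert_right {x y : V} (p : G.Walk x y) :
    ∀ i : ℕ, G.dist (p.getVert i) y ≤ p.length - i := by
  induction p with
  | nil => intro i; rw [Walk.getVert_of_length_le _ (by simp)]; simp [SimpleGraph.dist_self]
  | cons h q ih =>
    intro i
    cases i with
    | zero =>
      simpa [Walk.getVert] using G.dist_le (Walk.cons h q)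
    | succ n =>
      rw [Walk.getVert_cons_succ]
      simpa using ih n

lemma shortest_dist_getVert (hconn : G.Connected) {x y : V} (p : G.Walk x y)
    (hp : p.length = G.dist x y) {i : ℕ} (hi : i ≤ p.length) :
    G.dist x (p.getVert i) = i := by
  have h1 := dist_getVert_le hconn p i
  have h2 := dist_getVert_right p i
  have h3 : G.dist x y ≤ G.dist x (p.getVert i) + G.dist (p.getVert i) y :=
    hconn.dist_triangle
  omega

lemma vis_card_le [Fintype V] [Nonempty V] (hconn : G.Connected) (x : V) {S : Finset V}
    (hS : G.IsXVisSet x S) : S.card ≤ Fintype.card V - G.ecc x := by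
  rcases S.eq_empty_or_nonempty with rfl | hSne
  · simp
  -- max distance within S
  obtain ⟨y0, hy0S, hy0⟩ := Finset.exists_mem_eq_sup S hSne (fun y => G.dist x y)
  set D := S.sup (fun y => G.dist x y) with hD
  obtain ⟨P, ⟨hPpath, hPlen⟩, hPavoid⟩ := hS.2 y0 hy0S
  -- vertex at eccentricity distance
  obtain ⟨z, _, hz⟩ := Finset.exists_mem_eq_sup Finset.univ univ_nonempty (fun y => G.dist x y)
  set e := G.ecc x with he
  obtain ⟨Q, hQlen⟩ := hconn.exists_walk_length_eq_dist x z
  have hDe : D ≤ e := by rw [hy0]; exact Finset.le_sup (Finset.mem_univ y0)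
  have hPD : P.length = D := by rw [hPlen, ← hy0]
  have he2 : e = G.dist x z := hz
  have hQe : Q.length = e := by rw [hQlen, he2]
  -- the index set and the injection
  set F : Finset ℕ := Finset.range D ∪ Finset.Icc (D + 1) e with hF
  have hFcard : F.card = e := by
    rw [hF, Finset.card_union_of_disjoint]
    · rw [Nat.card_Icc, Finset.card_range]; omega
    · simp only [Finset.disjoint_left, Finset.mem_range, Finset.mem_Icc]
      intro a ha; omega
  set g : ℕ → V := fun d => if d < D then P.getVert d else Q.getVert d with hg
  have hgd : ∀ d ∈ F, G.dist x (g d) = d := by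
    intro d hd
    rw [hg]
    by_cases hdD : d < D
    · simp only [if_pos hdD]
      exact shortest_dist_getVert hconn P hPlen (by omega)
    · simp only [if_neg hdD]
      have hdI : d ∈ Finset.Icc (D + 1) e := by
        rcases Finset.mem_union.mp hd with h | h
        · exact absurd (Finset.mem_range.mp h) hdD
        · exact h
      have := Finset.mem_Icc.mp hdI
      exact shortest_dist_getVert hconn Q hQlen (by omega)
  have hgS : ∀ d ∈ F, g d ∉ S := by
    intro d hd hmem
    have hdist := hgd d hd
    by_cases hdD : d < D
    · have hsupp : g d ∈ P.support := by
        rw [Walk.mem_support_iff_exists_getVert]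
        exact ⟨d, by simp [hg, if_pos hdD], by omega⟩
      have := hPavoid (g d) hsupp hmem
      rw [this] at hdist
      omega
    · have : G.dist x (g d) ≤ D := Finset.le_sup hmem
      have hdI : d ∈ Finset.Icc (D + 1) e := by
        rcases Finset.mem_union.mp hd with h | h
        · exact absurd (Finset.mem_range.mp h) hdD
        · exact h
      have := Finset.mem_Icc.mp hdI
      omega
  have hinj : e ≤ (Finset.univ \ S).card := by
    rw [← hFcard]
    apply Finset.card_le_card_of_injOn g
    · intro d hd
      simp only [Finset.mem_coe, Finset.mem_sdiff, Finset.mem_univ, true_and]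
      exact hgS d hd
    · intro a ha b hb hab
      have := hgd a ha
      have := hgd b hb
      rw [hab] at *
      omega
  have hcard : (Finset.univ \ S).card = Fintype.card V - S.card := by
    rw [Finset.card_sdiff_of_subset (Finset.subset_univ S), Finset.card_univ]
  have hSle : S.card ≤ Fintype.card V := by
    simpa using Finset.card_le_card (Finset.subset_univ S)
  omega

lemma level_visset [Fintype V] (hconn : G.Connected) (x : V) (i : ℕ) (hi : 1 ≤ i) :
    G.IsXVisSet x (Finset.univ.filter (fun y => G.dist x y = i)) := by
  constructor
  · simp only [Finset.mem_filter, Finset.mem_univ, true_and, SimpleGraph.dist_self]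
    omega
  · intro y hy
    simp only [Finset.mem_filter, Finset.mem_univ, true_and] at hy
    obtain ⟨w, hw⟩ := hconn.exists_walk_length_eq_dist x y
    refine ⟨w.bypass, ⟨Walk.bypass_isPath w, ?_⟩, ?_⟩
    · exact le_antisymm ((Walk.length_bypass_le w).trans hw.le) (G.dist_le _)
    · have hblen : w.bypass.length = G.dist x y :=
        le_antisymm ((Walk.length_bypass_le w).trans hw.le) (G.dist_le _)
      intro z hz hzS
      simp only [Finset.mem_filter, Finset.mem_univ, true_and] at hzS
      obtain ⟨m, hm, hmle⟩ := Walk.mem_support_iff_exists_getVert.mp hz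
      have := shortest_dist_getVert hconn w.bypass hblen hmle
      rw [hm] at this
      have hmi : m = w.bypass.length := by omega
      rw [← hm, hmi, Walk.getVert_length]


end Helpers

/-- (n(G) − 1)/ecc_G(x) ≤ v_x(G) ≤ n(G) − ecc_G(x). -/
theorem stmt_12 [Fintype V] (G : SimpleGraph V)
    (hconn : G.Connected) (hn : 2 ≤ Fintype.card V) (x : V) :
    ((Fintype.card V : ℝ) - 1) / (G.ecc x : ℝ) ≤ (G.vx x : ℝ) ∧
    G.vx x ≤ Fintype.card V - G.ecc x := by
  have : Nonempty V := Fintype.card_pos_iff.mp (by omega)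
  set e := G.ecc x with he
  set n := Fintype.card V with hn'
  -- e ≥ 1
  obtain ⟨y, hy⟩ := Fintype.exists_ne_of_one_lt_card (by omega) x
  have hdy : 1 ≤ G.dist x y := hconn.pos_dist_of_ne (Ne.symm hy)
  have he1 : 1 ≤ e := le_trans hdy (Finset.le_sup (Finset.mem_univ y))
  have hecc : ∀ y : V, G.dist x y ≤ e := fun y => Finset.le_sup (Finset.mem_univ y)
  -- the set of cardinalities
  set T : Set ℕ := {m | ∃ S : Finset V, G.IsXVisSet x S ∧ S.card = m} with hT
  have hTne : T.Nonempty := ⟨0, ∅, ⟨Finset.notMem_empty x, fun y hy => absurd hy (Finset.notMem_empty y)⟩, Finset.card_empty⟩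
  have hTbdd : ∀ m ∈ T, m ≤ n - e := by
    rintro m ⟨S, hS, rfl⟩
    exact vis_card_le hconn x hS
  have hupper : G.vx x ≤ n - e := csSup_le hTne hTbdd
  -- lower bound
  have hbdd : BddAbove T := ⟨n - e, hTbdd⟩
  have hlevel : ∀ i ∈ Finset.Icc 1 e,
      (Finset.univ.filter (fun y => G.dist x y = i)).card ≤ G.vx x := by
    intro i hi
    exact le_csSup hbdd ⟨_, level_visset hconn x i (Finset.mem_Icc.mp hi).1, rfl⟩
  have hcover : (Finset.Icc 1 e).biUnion
      (fun i => Finset.univ.filter (fun y => G.dist x y = i)) = Finset.univ \ {x} := by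
    ext y
    simp only [Finset.mem_biUnion, Finset.mem_Icc, Finset.mem_filter, Finset.mem_univ, true_and,
      Finset.mem_sdiff, Finset.mem_singleton]
    constructor
    · rintro ⟨i, ⟨hi1, _⟩, hdi⟩
      intro hxy
      rw [hxy, SimpleGraph.dist_self] at hdi
      omega
    · intro hy
      exact ⟨G.dist x y, ⟨hconn.pos_dist_of_ne (Ne.symm hy), hecc y⟩, rfl⟩
  have hdisj : ∀ i ∈ Finset.Icc 1 e, ∀ j ∈ Finset.Icc 1 e, i ≠ j →
      Disjoint (Finset.univ.filter (fun y => G.dist x y = i))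
        (Finset.univ.filter (fun y => G.dist x y = j)) := by
    intro i _ j _ hij
    simp only [Finset.disjoint_left, Finset.mem_filter, Finset.mem_univ, true_and]
    intro a h1 h2
    exact hij (h1 ▸ h2 ▸ rfl)
  have hsum : ∑ i ∈ Finset.Icc 1 e,
      (Finset.univ.filter (fun y => G.dist x y = i)).card = n - 1 := by
    rw [← Finset.card_biUnion hdisj, hcover, Finset.card_sdiff_of_subset (by simp), Finset.card_univ,
      Finset.card_singleton]
  have hkey : n - 1 ≤ e * G.vx x := by
    calc n - 1 = ∑ i ∈ Finset.Icc 1 e,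
        (Finset.univ.filter (fun y => G.dist x y = i)).card := hsum.symm
      _ ≤ ∑ _i ∈ Finset.Icc 1 e, G.vx x := Finset.sum_le_sum hlevel
      _ = e * G.vx x := by rw [Finset.sum_const, Nat.card_Icc]; simp [Nat.smul_one_eq_cast]
  refine ⟨?_, hupper⟩
  rw [div_le_iff₀ (by exact_mod_cast he1)]
  have : ((n - 1 : ℕ) : ℝ) ≤ ((e * G.vx x : ℕ) : ℝ) := Nat.cast_le.mpr hkey
  rw [Nat.cast_sub (by omega), Nat.cast_mul] at this
  push_cast at this ⊢
  nlinarith
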